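/- arXiv:1910.05817 — 5 statements merged into one kernel-verified Lean document; each statement's English description precedes it below -/
import Mathlib

section
/- The set G_ρ(X) = {x ∈ X : 1 + ρ(x) > 0} with the operation u ∘_ρ v = u + v + ρ(u)·v forms a group, with identity 0 and inverse of u given by -u/(1+ρ(u)). -/
theorem popa_group_structure
    (X : Type*) [AddCommGroup X] [Module ℝ X] (ρ : X →ₗ[ℝ] ℝ) :
    (∀ u ∈ {x : X | 1 + ρ x > 0}, ∀ v ∈ {x : X | 1 + ρ x > 0},
        u + v + ρ u • v ∈ {x : X | 1 + ρ x > 0}) ∧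
    (∀ u v w : X,
        (u + v + ρ u • v) + w + ρ (u + v + ρ u • v) • w
          = u + (v + w + ρ v • w) + ρ u • (v + w + ρ v • w)) ∧
    ((0 : X) ∈ {x : X | 1 + ρ x > 0}) ∧
    (∀ u : X, (0 : X) + u + ρ (0 : X) • u = u ∧ u + 0 + ρ u • (0 : X) = u) ∧
    (∀ u ∈ {x : X | 1 + ρ x > 0},
        ((1 + ρ u)⁻¹ • (-u)) ∈ {x : X | 1 + ρ x > 0} ∧
        u + ((1 + ρ u)⁻¹ • (-u)) + ρ u • ((1 + ρ u)⁻¹ • (-u)) = 0 ∧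
        ((1 + ρ u)⁻¹ • (-u)) + u + ρ ((1 + ρ u)⁻¹ • (-u)) • u = 0) := by
  have key : ∀ u v : X, 1 + ρ (u + v + ρ u • v) = (1 + ρ u) * (1 + ρ v) := by
    intro u v; simp [map_add, map_smul]; ring
  refine ⟨?_, ?_, ?_, ?_, ?_⟩
  · intro u hu v hv
    simp only [Set.mem_setOf_eq] at *
    rw [key]; positivity
  · intro u v w
    simp only [map_add, map_smul, smul_eq_mul, smul_add, smul_smul, add_smul]
    module
  · simp
  · intro u; simp
  · intro u hu
    simp only [Set.mem_setOf_eq] at hu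
    have hne : (1 + ρ u) ≠ 0 := ne_of_gt hu
    have hc : 1 - (1 + ρ u)⁻¹ - ρ u * (1 + ρ u)⁻¹ = 0 := by field_simp; ring
    refine ⟨?_, ?_, ?_⟩
    · simp only [Set.mem_setOf_eq, map_smul, map_neg, smul_eq_mul]
      have : 1 + (1 + ρ u)⁻¹ * -ρ u = (1 + ρ u)⁻¹ := by
        field_simp; ring
      rw [this]; positivity
    · have h1 : u + (1 + ρ u)⁻¹ • -u + ρ u • (1 + ρ u)⁻¹ • -u
          = (1 - (1 + ρ u)⁻¹ - ρ u * (1 + ρ u)⁻¹) • u := by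
        module
      rw [h1, hc, zero_smul]
    · simp only [map_smul, map_neg, smul_eq_mul]
      have h2 : (1 + ρ u)⁻¹ • -u + u + ((1 + ρ u)⁻¹ * -ρ u) • u
          = (1 - (1 + ρ u)⁻¹ - ρ u * (1 + ρ u)⁻¹) • u := by
        module
      rw [h2, hc, zero_smul]
end

section
/- If the pair (K, g) satisfies the Goldie functional equation K(u ∘_ρ v) = K(u) + g(u)·K(v) for all u, v ∈ G_ρ(X), and K is not identically zero, then g is ρ-multiplicative: g(u ∘_ρ v) = g(u)·g(v) for all u, v ∈ G_ρ(X). -/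
theorem goldie_auxiliary_multiplicative
    (X Y : Type*) [AddCommGroup X] [Module ℝ X] [AddCommGroup Y] [Module ℝ Y]
    (ρ : X →ₗ[ℝ] ℝ) (K : X → Y) (g : X → ℝ)
    (hgpos : ∀ x, 1 + ρ x > 0 → g x > 0)
    (hKne : ∃ x, 1 + ρ x > 0 ∧ K x ≠ 0)
    (hGFE : ∀ u v, 1 + ρ u > 0 → 1 + ρ v > 0 →
        K (u + v + ρ u • v) = K u + g u • K v) :
    ∀ u v, 1 + ρ u > 0 → 1 + ρ v > 0 →
        g (u + v + ρ u • v) = g u * g v := by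
  intro u v hu hv
  obtain ⟨w, hw, hKw⟩ := hKne
  have hρ : (1 : ℝ) + ρ (u + v + ρ u • v) = (1 + ρ u) * (1 + ρ v) := by
    simp [map_add, map_smul]; ring
  have huv : 1 + ρ (u + v + ρ u • v) > 0 := by
    rw [hρ]; positivity
  have hassoc : (u + v + ρ u • v) + w + ρ (u + v + ρ u • v) • w
      = u + (v + w + ρ v • w) + ρ u • (v + w + ρ v • w) := by
    simp [map_add, map_smul, smul_add, smul_smul]
    module
  have hvw : 1 + ρ (v + w + ρ v • w) > 0 := by
    have : (1 : ℝ) + ρ (v + w + ρ v • w) = (1 + ρ v) * (1 + ρ w) := by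
      simp [map_add, map_smul]; ring
    rw [this]; positivity
  have h1 := hGFE (u + v + ρ u • v) w huv hw
  have h2 := hGFE u (v + w + ρ v • w) hu hvw
  have h3 := hGFE v w hv hw
  rw [hassoc, h2, h3, hGFE u v hu hv] at h1
  have key : (g (u + v + ρ u • v) - g u * g v) • K w = 0 := by
    rw [sub_smul, mul_smul]
    linear_combination (norm := module) -h1
  rcases smul_eq_zero.mp key with h | h
  · linarith [sub_eq_zero.mp h]
  · exact absurd h hKw
end

section
/- For real parameters γ ≠ 0 and ρ > 0, the Popa link function λ(t) := [(1+tρ)^{γ/ρ} − 1]/[(1+ρ)^{γ/ρ} − 1] satisfies λ(s ∘_ρ t) = λ(s) ∘_σ λ(t) for σ := (1+ρ)^{γ/ρ} − 1, where a ∘_σ b := a + b + σab. -/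
theorem popa_link_homomorphism (γ ρ : ℝ) (hγ : γ ≠ 0) (hρ : ρ > 0) :
    ∀ s t : ℝ, 1 + ρ * s > 0 → 1 + ρ * t > 0 →
      (fun x : ℝ => ((1 + x * ρ) ^ (γ / ρ) - 1) / ((1 + ρ) ^ (γ / ρ) - 1))
          (s + t + ρ * s * t)
        = (fun x : ℝ => ((1 + x * ρ) ^ (γ / ρ) - 1) / ((1 + ρ) ^ (γ / ρ) - 1)) s
          + (fun x : ℝ => ((1 + x * ρ) ^ (γ / ρ) - 1) / ((1 + ρ) ^ (γ / ρ) - 1)) t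
          + ((1 + ρ) ^ (γ / ρ) - 1) *
            ((fun x : ℝ => ((1 + x * ρ) ^ (γ / ρ) - 1) / ((1 + ρ) ^ (γ / ρ) - 1)) s *
             (fun x : ℝ => ((1 + x * ρ) ^ (γ / ρ) - 1) / ((1 + ρ) ^ (γ / ρ) - 1)) t) := by
  intro s t hs ht
  simp only
  have hs' : 1 + s * ρ > 0 := by linarith [hs]; 
  have ht' : 1 + t * ρ > 0 := by linarith [ht]
  have hprod : 1 + (s + t + ρ * s * t) * ρ = (1 + s * ρ) * (1 + t * ρ) := by ring
  have hmul : (1 + (s + t + ρ * s * t) * ρ) ^ (γ / ρ)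
      = (1 + s * ρ) ^ (γ / ρ) * (1 + t * ρ) ^ (γ / ρ) := by
    rw [hprod, Real.mul_rpow hs'.le ht'.le]
  have hD : (1 + ρ) ^ (γ / ρ) - 1 ≠ 0 := by
    have h1 : (1 : ℝ) < 1 + ρ := by linarith
    have he : γ / ρ ≠ 0 := div_ne_zero hγ (ne_of_gt hρ)
    rcases lt_or_gt_of_ne he with h | h
    · have := Real.rpow_lt_one_of_one_lt_of_neg h1 h
      linarith
    · have := Real.one_lt_rpow_iff_of_pos (by linarith : (0:ℝ) < 1 + ρ) |>.mpr (Or.inl ⟨h1, h⟩)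
      linarith
  rw [hmul]
  field_simp
  ring
end

section
/- Suppose (K, g) is a continuous solution of K(u ∘_ρ v) = K(u) + g(u)K(v) on G_ρ(X), with K(u) ≠ 0 for some fixed u, and g(tu) ≠ 1 for all t ≠ 0 in the radial line through u, and K(tu) = λ_u(t)K(u) for a scalar function λ_u. Then (g(tu) − 1)·K(u) = (g(u) − 1)·K(tu) for all t with tu ∈ G_ρ(X). -/
theorem switching_lemma
    (X Y : Type*) [AddCommGroup X] [Module ℝ X] [AddCommGroup Y] [Module ℝ Y]
    (ρ : X →ₗ[ℝ] ℝ) (K : X → Y) (g : X → ℝ) (u : X)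
    (hu : 1 + ρ u > 0)
    (hKu : K u ≠ 0)
    (hg : ∀ t : ℝ, t ≠ 0 → 1 + ρ (t • u) > 0 → g (t • u) ≠ 1)
    (lam : ℝ → ℝ)
    (hrad : ∀ t : ℝ, 1 + ρ (t • u) > 0 → K (t • u) = lam t • K u)
    (hGFE : ∀ v w, 1 + ρ v > 0 → 1 + ρ w > 0 →
        K (v + w + ρ v • w) = K v + g v • K w) :
    ∀ t : ℝ, 1 + ρ (t • u) > 0 →
      (g (t • u) - 1) • K u = (g u - 1) • K (t • u) := by
  intro t ht
  have h1 := hGFE u (t • u) hu ht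
  have h2 := hGFE (t • u) u ht hu
  have harg : u + t • u + ρ u • t • u = t • u + u + ρ (t • u) • u := by
    rw [map_smul]
    simp [smul_smul, mul_comm]
    abel
  rw [harg, h2] at h1
  linear_combination (norm := module) h1
end

section
/- Suppose K : ℝ → ℝ and differentiable g, h : ℝ → ℝ with g(0) = h(0) = 1 satisfy K(a + h(a)b) = K(a) + g(a)K(b) for all a, b, where K(t) = λ(t)·K(1) with K(1) ≠ 0 and λ(t) = λ(t; γ, ρ) the Popa link function with γ = g'(0) ≠ 0, ρ = h'(0) = 0. Then h ≡ 1 and g(s) = e^{γs} for all s. -/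
theorem tetrachotomy_case_ii
    (K g h : ℝ → ℝ)
    (hgdiff : Differentiable ℝ g) (hhdiff : Differentiable ℝ h)
    (hg0 : g 0 = 1) (hh0 : h 0 = 1)
    (hγ : deriv g 0 ≠ 0) (hρ : deriv h 0 = 0)
    (hK1 : K 1 ≠ 0)
    (hrad : ∀ t : ℝ,
        K t = (Real.exp (deriv g 0 * t) - 1) / (Real.exp (deriv g 0) - 1) * K 1)
    (hGGE : ∀ a b : ℝ, K (a + h a * b) = K a + g a * K b) :
    ∀ s : ℝ, h s = 1 ∧ g s = Real.exp (deriv g 0 * s) := by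
  set γ := deriv g 0 with hγdef
  have hE : Real.exp γ - 1 ≠ 0 := by
    intro h'
    have : Real.exp γ = Real.exp 0 := by rw [Real.exp_zero]; linarith
    exact hγ (Real.exp_eq_exp.mp this)
  -- key functional identity
  have key : ∀ a b : ℝ,
      Real.exp (γ * a) * (Real.exp (γ * (h a * b)) - 1)
        = g a * (Real.exp (γ * b) - 1) := by
    intro a b
    have h1 := hGGE a b
    rw [hrad (a + h a * b), hrad a, hrad b] at h1
    field_simp at h1
    have h2 : Real.exp (γ * (a + h a * b)) - 1
        = (Real.exp (γ * a) - 1) + g a * (Real.exp (γ * b) - 1) := by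
      have h2' : (Real.exp (γ * (a + h a * b)) - 1) * K 1
          = ((Real.exp (γ * a) - 1) + g a * (Real.exp (γ * b) - 1)) * K 1 := by
        linear_combination K 1 * h1
      exact mul_right_cancel₀ hK1 h2'
    have h3 : Real.exp (γ * (a + h a * b))
        = Real.exp (γ * a) * Real.exp (γ * (h a * b)) := by
      rw [← Real.exp_add]; ring_nf
    rw [h3] at h2
    linarith [h2]
  -- dichotomy for each a
  have dich : ∀ a : ℝ, g a = 0 ∨ (h a = 1 ∧ g a = Real.exp (γ * a)) := by
    intro a
    have e1 := key a 1
    have e2 := key a 2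
    have hA : Real.exp (γ * a) ≠ 0 := Real.exp_ne_zero _
    set A := Real.exp (γ * a) with hAdef
    set X := Real.exp (γ * h a) with hXdef
    set E := Real.exp γ with hEdef
    have hX1 : Real.exp (γ * (h a * 1)) = X := by rw [hXdef]; ring_nf
    have hX2 : Real.exp (γ * (h a * 2)) = X ^ 2 := by
      rw [hXdef, ← Real.exp_nat_mul]; ring_nf
    have hE1 : Real.exp (γ * (1:ℝ)) = E := by rw [hEdef]; ring_nf
    have hE2 : Real.exp (γ * (2:ℝ)) = E ^ 2 := by
      rw [hEdef, ← Real.exp_nat_mul]; ring_nf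
    rw [hX1, hE1] at e1
    rw [hX2, hE2] at e2
    have hfact : A * (X - 1) * (X - E) = 0 := by
      linear_combination e2 - (E + 1) * e1
    have hprod : (X - 1) * (X - E) = 0 := by
      have := mul_eq_zero.mp (by linear_combination hfact : A * ((X - 1) * (X - E)) = 0)
      rcases this with h' | h'
      · exact absurd h' hA
      · exact h'
    rcases mul_eq_zero.mp hprod with h' | h'
    · -- X = 1 so g a = 0
      left
      have h0 : g a * (E - 1) = 0 := by linear_combination -e1 + A * h'
      rcases mul_eq_zero.mp h0 with h'' | h''
      · exact h''
      · exact absurd h'' hE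
    · -- X = E so h a = 1 and g a = A
      have hXE : X = E := sub_eq_zero.mp h'
      have hu : γ * h a = γ := Real.exp_eq_exp.mp (by rw [← hXdef, ← hEdef]; exact hXE)
      have hha : h a = 1 := by
        have : γ * h a = γ * 1 := by rw [hu, mul_one]
        exact mul_left_cancel₀ hγ this
      refine Or.inr ⟨hha, ?_⟩
      have hAE : A * (E - 1) = g a * (E - 1) := by linear_combination e1 - A * h'
      exact (mul_right_cancel₀ hE hAE).symm
  -- g is never 0, by connectedness
  have hgne : ∀ a : ℝ, g a ≠ 0 := by
    have hcont : Continuous g := hgdiff.continuous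
    set S : Set ℝ := {a | g a = 0} with hS
    have hSclosed : IsClosed S := isClosed_eq hcont continuous_const
    have hTclosed : IsClosed {a : ℝ | g a = Real.exp (γ * a)} :=
      isClosed_eq hcont (Real.continuous_exp.comp (continuous_const.mul continuous_id))
    have hcompl : Sᶜ = {a : ℝ | g a = Real.exp (γ * a)} := by
      ext a
      simp only [Set.mem_compl_iff, Set.mem_setOf_eq, hS]
      constructor
      · intro ha
        rcases dich a with h' | h'
        · exact absurd h' ha
        · exact h'.2
      · intro ha h0
        rw [h0] at ha
        exact absurd ha.symm (Real.exp_ne_zero _)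
    have hSopen : IsOpen S := by
      rw [← isClosed_compl_iff, hcompl]; exact hTclosed
    have hclopen : IsClopen S := ⟨hSclosed, hSopen⟩
    rcases isClopen_iff.mp hclopen with h' | h'
    · intro a ha
      have : a ∈ S := ha
      rw [h'] at this
      exact this
    · exfalso
      have : (0:ℝ) ∈ S := by rw [h']; trivial
      rw [hS] at this
      simp only [Set.mem_setOf_eq, hg0] at this
      exact one_ne_zero this
  intro s
  rcases dich s with h' | h'
  · exact absurd h' (hgne s)
  · exact h'
end
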